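/- The Kirchhoff vector fields on S^{n+1} can be written explicitly as X_i(x) = x_{n+2} e_i - x_i e_{n+2} + β(x) J_y(e_i - ⟨y, e_i⟩ y), where x = x_{n+2} e_{n+2} + β(x) y with y ∈ S^n; each X_i(x) is tangent to S^{n+1} at x (i.e., ⟨X_i(x), x⟩ = 0). -/
import Mathlib


open scoped RealInnerProductSpace

/-- the Kirchhoff vector fields on `S^{n+1}` admit the explicit form
`X_i(x) = x_{n+2}·e_i - x_i·e_{n+2} + β·J_y(e_i - ⟨y,e_i⟩y)` and are tangent to `S^{n+1}`
at `x`. Abstractly: for `x = α·e + β·y` (`α² + β² = 1`, `β ≥ 0`, `e ⊥ y` unit vectors) and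
any `v ⊥ e`, the vector `σ_x(v) = α·v + β·J̃(v)` equals
`α·v - ⟨x,v⟩·e + β·J̃(v - ⟨y,v⟩·y)` and satisfies `⟨σ_x(v), x⟩ = 0`. -/
theorem kirchhoff_stmt13 {n : ℕ}
    (e y : EuclideanSpace ℝ (Fin (n + 2)))
    (he : ‖e‖ = 1) (hy : ‖y‖ = 1) (hey : ⟪e, y⟫ = 0)
    (J : EuclideanSpace ℝ (Fin (n + 2)) →ₗ[ℝ] EuclideanSpace ℝ (Fin (n + 2)))
    (hJe : J e = y) (hJy : J y = -e)
    (hskew : ∀ u v, ⟪J u, v⟫ = -⟪u, J v⟫)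
    (α β : ℝ) (hαβ : α ^ 2 + β ^ 2 = 1) (hβ : 0 ≤ β) :
    ∀ v, ⟪v, e⟫ = 0 →
      (α • v + β • J v
          = α • v - ⟪α • e + β • y, v⟫ • e + β • J (v - ⟪y, v⟫ • y))
        ∧ ⟪α • v + β • J v, α • e + β • y⟫ = 0 := by
  intro v hv
  have hev : ⟪e, v⟫ = 0 := by rw [real_inner_comm]; exact hv
  have hJve : ⟪J v, e⟫ = -⟪v, y⟫ := by rw [hskew, ← hJe]
  have hJvy : ⟪J v, y⟫ = 0 := by
    rw [hskew, hJy, inner_neg_right, hv]; ring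
  constructor
  · have h1 : ⟪α • e + β • y, v⟫ = β * ⟪y, v⟫ := by
      simp [inner_add_left, inner_smul_left, hev]
    rw [h1, map_sub, map_smul, hJy]
    module
  · simp only [inner_add_left, inner_add_right, inner_smul_left, inner_smul_right,
      hJve, hJvy, hv, conj_trivial, real_inner_comm v y]
    ring
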